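/- Let r > 0, μ > 0, Y = r/μ, τ > 0 and a ∈ (0,1) with (1−a)·e^{r·τ} > 1, and set T* = Y·((1−a)·e^{r·τ} − 1)/(e^{r·τ} − 1). Then: (i) ∫₀^τ T*·e^{r·u}/(1 + (T*/Y)·(e^{r·u} − 1)) du = (1/μ)·( ln(1−a) + r·τ ); and (ii) the Floquet multiplier λ₂* := (1−a)·exp( r·τ − 2μ·∫₀^τ T*·e^{r·u}/(1 + (T*/Y)(e^{r·u} − 1)) du ) equals exp( −r·τ + ln(1/(1−a)) ), so that λ₂* < 1 if and only if r·τ > ln(1/(1−a)). -/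

import Mathlib

/-- Closed form of the integral of the periodic tree biomass over one
fire period and the resulting tree-direction Floquet multiplier of the periodic
savanna equilibrium. -/
theorem savanna_tree_floquet_multiplier
    (r μ Y τ a Ts lam₂ : ℝ) (hr : 0 < r) (hμ : 0 < μ) (hY : Y = r / μ)
    (hτ : 0 < τ) (ha : a ∈ Set.Ioo (0:ℝ) 1)
    (hcond : 1 < (1 - a) * Real.exp (r * τ))
    (hTs : Ts = Y * ((1 - a) * Real.exp (r * τ) - 1) / (Real.exp (r * τ) - 1))
    (hlam₂ : lam₂ = (1 - a) * Real.exp (r * τ - 2 * μ * ∫ u in (0:ℝ)..τ,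
      Ts * Real.exp (r * u) / (1 + (Ts / Y) * (Real.exp (r * u) - 1)))) :
    (∫ u in (0:ℝ)..τ, Ts * Real.exp (r * u) / (1 + (Ts / Y) * (Real.exp (r * u) - 1))) =
      (1 / μ) * (Real.log (1 - a) + r * τ) ∧
    lam₂ = Real.exp (-(r * τ) + Real.log (1 / (1 - a))) ∧
    (lam₂ < 1 ↔ Real.log (1 / (1 - a)) < r * τ) := by
  obtain ⟨ha0, ha1⟩ := ha
  have h1a : 0 < 1 - a := by linarith
  have hY0 : 0 < Y := by rw [hY]; positivity
  have hE : 1 < Real.exp (r * τ) := by nlinarith [Real.add_one_le_exp (r * τ), mul_pos hr hτ]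
  have hE1 : (0:ℝ) < Real.exp (r * τ) - 1 := by linarith
  have hc : Ts / Y = ((1 - a) * Real.exp (r * τ) - 1) / (Real.exp (r * τ) - 1) := by
    rw [hTs]; field_simp
  set c : ℝ := Ts / Y with hcdef
  have hc0 : 0 < c := by rw [hc]; exact div_pos (by linarith) hE1
  have hTs' : Ts = c * Y := by rw [hcdef, div_mul_cancel₀ Ts hY0.ne']
  have hpos : ∀ u ∈ Set.uIcc (0:ℝ) τ, 0 < 1 + c * (Real.exp (r * u) - 1) := by
    intro u hu
    rw [Set.uIcc_of_le hτ.le] at hu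
    have h1 : 1 ≤ Real.exp (r * u) := Real.one_le_exp (mul_nonneg hr.le hu.1)
    nlinarith
  have hderiv : ∀ u ∈ Set.uIcc (0:ℝ) τ,
      HasDerivAt (fun x => (1 / μ) * Real.log (1 + c * (Real.exp (r * x) - 1)))
        (Ts * Real.exp (r * u) / (1 + c * (Real.exp (r * u) - 1))) u := by
    intro u hu
    have hexp := ((hasDerivAt_id u).const_mul r).exp
    have hg : HasDerivAt (fun x : ℝ => 1 + c * (Real.exp (r * x) - 1))
        (c * (Real.exp (r * u) * r)) u := by
      have := ((hexp.sub_const 1).const_mul c).const_add 1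
      simpa using this
    have hlog := (hg.log (ne_of_gt (hpos u hu))).const_mul (1 / μ)
    refine hlog.congr_deriv ?_
    have hgpos := hpos u hu
    rw [hTs', hY]
    field_simp
  have hcont : IntervalIntegrable
      (fun u => Ts * Real.exp (r * u) / (1 + c * (Real.exp (r * u) - 1)))
      MeasureTheory.volume 0 τ := by
    apply ContinuousOn.intervalIntegrable
    apply ContinuousOn.div
    · exact (continuous_const.mul (Real.continuous_exp.comp (continuous_const.mul continuous_id))).continuousOn
    · exact (continuous_const.add (continuous_const.mul ((Real.continuous_exp.comp (continuous_const.mul continuous_id)).sub continuous_const))).continuousOn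
    · intro u hu; exact ne_of_gt (hpos u hu)
  have key : (∫ u in (0:ℝ)..τ, Ts * Real.exp (r * u) / (1 + c * (Real.exp (r * u) - 1))) =
      (1 / μ) * (Real.log (1 - a) + r * τ) := by
    rw [intervalIntegral.integral_eq_sub_of_hasDerivAt hderiv hcont]
    have hend : 1 + c * (Real.exp (r * τ) - 1) = (1 - a) * Real.exp (r * τ) := by
      rw [hc]; field_simp; ring
    simp only [mul_zero, Real.exp_zero, sub_self, mul_zero, add_zero, Real.log_one, hend]
    rw [Real.log_mul (ne_of_gt h1a) (ne_of_gt (Real.exp_pos _)), Real.log_exp]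
    ring
  have hlog1 : Real.log (1 / (1 - a)) = -Real.log (1 - a) := by
    rw [Real.log_div one_ne_zero (ne_of_gt h1a), Real.log_one]; ring
  have hfs : 2 * μ * (1 / μ * (Real.log (1 - a) + r * τ)) = 2 * (Real.log (1 - a) + r * τ) := by
    field_simp
  have h2 : lam₂ = Real.exp (-(r * τ) + Real.log (1 / (1 - a))) := by
    rw [hlam₂, key, hlog1]
    rw [show r * τ - 2 * μ * (1 / μ * (Real.log (1 - a) + r * τ)) =
      -(r * τ) - 2 * Real.log (1 - a) by rw [hfs]; ring]
    nth_rewrite 1 [show (1 - a) = Real.exp (Real.log (1 - a)) from (Real.exp_log h1a).symm]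
    rw [← Real.exp_add]
    congr 1
    ring
  refine ⟨key, h2, ?_⟩
  rw [h2, Real.exp_lt_one_iff]
  constructor <;> intro h <;> linarith
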